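/- Let {A_α}_{α=1}^m and {a_α}_{α=1}^m be families in M_d(ℂ), each pairwise orthogonal with respect to the Hilbert–Schmidt inner product, and let {D_β}_{β=1}^m be a family in M_d(ℂ) that is pairwise orthogonal with respect to the Hilbert–Schmidt inner product. Let B_1, …, B_m, C_1, …, C_m ∈ M_d(ℂ) be arbitrary. On ℂ^d ⊗ ℂ^d ⊗ ℂ^d define Q̃ = Σ_α A_α ⊗ B_α ⊗ I_d, Q̂̃ = Σ_α a_α ⊗ B_α ⊗ I_d, and P̃ = Σ_β I_d ⊗ C_β ⊗ D_β. Then ‖[Q̃, P̃]‖_F² = Σ_{α,β} ‖A_α‖_F² · ‖[B_α, C_β]‖_F² · ‖D_β‖_F², and consequently, if ‖a_α‖_F = ‖A_α‖_F for every α, then ‖[Q̂̃, P̃]‖_F = ‖[Q̃, P̃]‖_F. -/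

import Mathlib

open Matrix
open scoped Kronecker

noncomputable def hsInner {n : Type*} [Fintype n] (A B : Matrix n n ℂ) : ℂ :=
  Matrix.trace (Aᴴ * B)

noncomputable def frob {n : Type*} [Fintype n] (A : Matrix n n ℂ) : ℝ :=
  Real.sqrt (Matrix.trace (Aᴴ * A)).re

variable {n p : Type*} [Fintype n] [Fintype p]

lemma kron_conjT (A : Matrix n n ℂ) (B : Matrix p p ℂ) :
    (A ⊗ₖ B)ᴴ = Aᴴ ⊗ₖ Bᴴ := by
  ext ⟨i, j⟩ ⟨k, l⟩
  simp [Matrix.conjTranspose_apply, Matrix.kroneckerMap_apply]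

lemma hsInner_kron (A A' : Matrix n n ℂ) (B B' : Matrix p p ℂ) :
    hsInner (A ⊗ₖ B) (A' ⊗ₖ B') = hsInner A A' * hsInner B B' := by
  rw [hsInner, kron_conjT, ← Matrix.mul_kronecker_mul, Matrix.trace_kronecker]
  rfl

lemma kron_sub (A : Matrix n n ℂ) (B B' : Matrix p p ℂ) :
    A ⊗ₖ (B - B') = A ⊗ₖ B - A ⊗ₖ B' := by
  ext ⟨i, j⟩ ⟨k, l⟩
  simp [Matrix.kroneckerMap_apply, mul_sub]

lemma sub_kron (A A' : Matrix n n ℂ) (B : Matrix p p ℂ) :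
    (A - A') ⊗ₖ B = A ⊗ₖ B - A' ⊗ₖ B := by
  ext ⟨i, j⟩ ⟨k, l⟩
  simp [Matrix.kroneckerMap_apply, sub_mul]

lemma hsInner_self (A : Matrix n n ℂ) :
    hsInner A A = ((∑ i, ∑ j, Complex.normSq (A j i) : ℝ) : ℂ) := by
  simp only [hsInner, Matrix.trace, Matrix.diag, Matrix.mul_apply,
    Matrix.conjTranspose_apply]
  push_cast
  refine Finset.sum_congr rfl fun i _ => Finset.sum_congr rfl fun j _ => ?_
  rw [Complex.normSq_eq_conj_mul_self]; rfl

lemma hsInner_self_re_nonneg (A : Matrix n n ℂ) : 0 ≤ (hsInner A A).re := by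
  rw [hsInner_self, Complex.ofReal_re]
  exact Finset.sum_nonneg fun i _ => Finset.sum_nonneg fun j _ => Complex.normSq_nonneg _

lemma frob_eq (A : Matrix n n ℂ) : frob A = Real.sqrt (hsInner A A).re := rfl

lemma frob_sq (A : Matrix n n ℂ) : frob A ^ 2 = (hsInner A A).re := by
  rw [frob_eq, Real.sq_sqrt (hsInner_self_re_nonneg A)]

lemma hsInner_sum_sum {ι κ : Type*} (s : Finset ι) (t : Finset κ)
    (f : ι → Matrix n n ℂ) (g : κ → Matrix n n ℂ) :
    hsInner (∑ i ∈ s, f i) (∑ j ∈ t, g j) =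
      ∑ i ∈ s, ∑ j ∈ t, hsInner (f i) (g j) := by
  simp only [hsInner, Matrix.conjTranspose_sum, Finset.sum_mul_sum, Matrix.trace_sum,
    Finset.mul_sum, Finset.sum_mul]
  rw [Finset.sum_comm]

lemma commutator_eq (d m : ℕ) (A B C Dm : Fin m → Matrix (Fin d) (Fin d) ℂ) :
    (∑ α, (A α ⊗ₖ B α) ⊗ₖ (1 : Matrix (Fin d) (Fin d) ℂ)) *
        (∑ β, ((1 : Matrix (Fin d) (Fin d) ℂ) ⊗ₖ C β) ⊗ₖ Dm β) -
      (∑ β, ((1 : Matrix (Fin d) (Fin d) ℂ) ⊗ₖ C β) ⊗ₖ Dm β) *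
        (∑ α, (A α ⊗ₖ B α) ⊗ₖ (1 : Matrix (Fin d) (Fin d) ℂ)) =
    ∑ α, ∑ β, (A α ⊗ₖ (B α * C β - C β * B α)) ⊗ₖ Dm β := by
  have h2 : (∑ β, ((1 : Matrix (Fin d) (Fin d) ℂ) ⊗ₖ C β) ⊗ₖ Dm β) *
      (∑ α, (A α ⊗ₖ B α) ⊗ₖ (1 : Matrix (Fin d) (Fin d) ℂ)) =
      ∑ α, ∑ β, (((1 : Matrix (Fin d) (Fin d) ℂ) ⊗ₖ C β) ⊗ₖ Dm β) *
        ((A α ⊗ₖ B α) ⊗ₖ (1 : Matrix (Fin d) (Fin d) ℂ)) := by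
    rw [Finset.sum_mul_sum]; rw [Finset.sum_comm]
  rw [Finset.sum_mul_sum, h2, ← Finset.sum_sub_distrib]
  refine Finset.sum_congr rfl fun α _ => ?_
  rw [← Finset.sum_sub_distrib]
  refine Finset.sum_congr rfl fun β _ => ?_
  rw [← Matrix.mul_kronecker_mul, ← Matrix.mul_kronecker_mul,
    ← Matrix.mul_kronecker_mul, ← Matrix.mul_kronecker_mul]
  simp only [Matrix.mul_one, Matrix.one_mul]
  rw [kron_sub, sub_kron]

lemma re_triple (U V W : Matrix n n ℂ) :
    (hsInner U U * hsInner V V * hsInner W W).re =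
      frob U ^ 2 * frob V ^ 2 * frob W ^ 2 := by
  rw [frob_sq, frob_sq, frob_sq, hsInner_self U, hsInner_self V, hsInner_self W,
    ← Complex.ofReal_mul, ← Complex.ofReal_mul]
  simp

lemma main_aux (d m : ℕ) (X B C Dm : Fin m → Matrix (Fin d) (Fin d) ℂ)
    (hX : ∀ α β, α ≠ β → hsInner (X α) (X β) = 0)
    (hD : ∀ α β, α ≠ β → hsInner (Dm α) (Dm β) = 0) :
    (frob ((∑ α, (X α ⊗ₖ B α) ⊗ₖ (1 : Matrix (Fin d) (Fin d) ℂ)) *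
            (∑ β, ((1 : Matrix (Fin d) (Fin d) ℂ) ⊗ₖ C β) ⊗ₖ Dm β) -
           (∑ β, ((1 : Matrix (Fin d) (Fin d) ℂ) ⊗ₖ C β) ⊗ₖ Dm β) *
            (∑ α, (X α ⊗ₖ B α) ⊗ₖ (1 : Matrix (Fin d) (Fin d) ℂ)))) ^ 2 =
      ∑ α, ∑ β, (frob (X α)) ^ 2 * (frob (B α * C β - C β * B α)) ^ 2 *
        (frob (Dm β)) ^ 2 := by
  rw [commutator_eq, frob_sq]
  have key : hsInner (∑ α, ∑ β, (X α ⊗ₖ (B α * C β - C β * B α)) ⊗ₖ Dm β)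
      (∑ α, ∑ β, (X α ⊗ₖ (B α * C β - C β * B α)) ⊗ₖ Dm β) =
      ∑ α, ∑ β, hsInner (X α) (X α) *
        hsInner (B α * C β - C β * B α) (B α * C β - C β * B α) *
        hsInner (Dm β) (Dm β) := by
    rw [hsInner_sum_sum]
    simp only [hsInner_sum_sum]
    refine Finset.sum_congr rfl fun α _ => ?_
    rw [Finset.sum_eq_single α]
    · refine Finset.sum_congr rfl fun β _ => ?_
      rw [Finset.sum_eq_single β]
      · rw [hsInner_kron, hsInner_kron]
      · intro β' _ hβ'
        rw [hsInner_kron, hsInner_kron, hD _ _ (Ne.symm hβ')]; ring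
      · intro h; exact absurd (Finset.mem_univ β) h
    · intro α' _ hα'
      simp only [hsInner_kron]
      rw [hX _ _ (Ne.symm hα')]
      simp
    · intro h; exact absurd (Finset.mem_univ α) h
  rw [key]
  simp only [Complex.re_sum]
  exact Finset.sum_congr rfl fun α _ => Finset.sum_congr rfl fun β _ => re_triple _ _ _

/-- For `Q̃ = Σ_α A_α ⊗ B_α ⊗ I`, `Q̂̃ = Σ_α a_α ⊗ B_α ⊗ I` and
`P̃ = Σ_β I ⊗ C_β ⊗ D_β`, with `{A_α}`, `{a_α}` and `{D_β}` pairwise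
orthogonal families, one has
`‖[Q̃,P̃]‖_F² = Σ_{α,β} ‖A_α‖_F² ‖[B_α,C_β]‖_F² ‖D_β‖_F²`;
consequently, if `‖a_α‖_F = ‖A_α‖_F` for all `α`, then
`‖[Q̂̃,P̃]‖_F = ‖[Q̃,P̃]‖_F`. -/
theorem commutator_frob_unchanged_by_norm_preserving_replacement (d m : ℕ)
    (A a B C Dm : Fin m → Matrix (Fin d) (Fin d) ℂ)
    (hAo : ∀ α β, α ≠ β → hsInner (A α) (A β) = 0)
    (hao : ∀ α β, α ≠ β → hsInner (a α) (a β) = 0)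
    (hDo : ∀ α β, α ≠ β → hsInner (Dm α) (Dm β) = 0) :
    (frob ((∑ α, (A α ⊗ₖ B α) ⊗ₖ (1 : Matrix (Fin d) (Fin d) ℂ)) *
            (∑ β, ((1 : Matrix (Fin d) (Fin d) ℂ) ⊗ₖ C β) ⊗ₖ Dm β) -
           (∑ β, ((1 : Matrix (Fin d) (Fin d) ℂ) ⊗ₖ C β) ⊗ₖ Dm β) *
            (∑ α, (A α ⊗ₖ B α) ⊗ₖ (1 : Matrix (Fin d) (Fin d) ℂ)))) ^ 2 =
      (∑ α, ∑ β, (frob (A α)) ^ 2 * (frob (B α * C β - C β * B α)) ^ 2 *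
        (frob (Dm β)) ^ 2) ∧
    ((∀ α, frob (a α) = frob (A α)) →
      frob ((∑ α, (a α ⊗ₖ B α) ⊗ₖ (1 : Matrix (Fin d) (Fin d) ℂ)) *
             (∑ β, ((1 : Matrix (Fin d) (Fin d) ℂ) ⊗ₖ C β) ⊗ₖ Dm β) -
            (∑ β, ((1 : Matrix (Fin d) (Fin d) ℂ) ⊗ₖ C β) ⊗ₖ Dm β) *
             (∑ α, (a α ⊗ₖ B α) ⊗ₖ (1 : Matrix (Fin d) (Fin d) ℂ))) =
      frob ((∑ α, (A α ⊗ₖ B α) ⊗ₖ (1 : Matrix (Fin d) (Fin d) ℂ)) *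
             (∑ β, ((1 : Matrix (Fin d) (Fin d) ℂ) ⊗ₖ C β) ⊗ₖ Dm β) -
            (∑ β, ((1 : Matrix (Fin d) (Fin d) ℂ) ⊗ₖ C β) ⊗ₖ Dm β) *
             (∑ α, (A α ⊗ₖ B α) ⊗ₖ (1 : Matrix (Fin d) (Fin d) ℂ)))) := by
  refine ⟨main_aux d m A B C Dm hAo hDo, fun h => ?_⟩
  have h1 := main_aux d m a B C Dm hao hDo
  have h2 := main_aux d m A B C Dm hAo hDo
  have hsq : (frob ((∑ α, (a α ⊗ₖ B α) ⊗ₖ (1 : Matrix (Fin d) (Fin d) ℂ)) *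
             (∑ β, ((1 : Matrix (Fin d) (Fin d) ℂ) ⊗ₖ C β) ⊗ₖ Dm β) -
            (∑ β, ((1 : Matrix (Fin d) (Fin d) ℂ) ⊗ₖ C β) ⊗ₖ Dm β) *
             (∑ α, (a α ⊗ₖ B α) ⊗ₖ (1 : Matrix (Fin d) (Fin d) ℂ)))) ^ 2 =
      (frob ((∑ α, (A α ⊗ₖ B α) ⊗ₖ (1 : Matrix (Fin d) (Fin d) ℂ)) *
             (∑ β, ((1 : Matrix (Fin d) (Fin d) ℂ) ⊗ₖ C β) ⊗ₖ Dm β) -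
            (∑ β, ((1 : Matrix (Fin d) (Fin d) ℂ) ⊗ₖ C β) ⊗ₖ Dm β) *
             (∑ α, (A α ⊗ₖ B α) ⊗ₖ (1 : Matrix (Fin d) (Fin d) ℂ)))) ^ 2 := by
    rw [h1, h2]
    exact Finset.sum_congr rfl fun α _ => Finset.sum_congr rfl fun β _ => by rw [h α]
  exact (pow_left_inj₀ (Real.sqrt_nonneg _) (Real.sqrt_nonneg _) two_ne_zero).mp hsq
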